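/- Let F be a normalized submodular set function on a finite set V, f its Lovász extension (the support function of B(F)), and ε > 0. Let w* be a minimizer of w ↦ f(w) + (1/2)‖w‖₂² over the box [−ε, ε]^V. Then for every α ∈ (−ε, ε), the suplevel set { j ∈ V : w*_j ≥ α } minimizes the set function A ↦ F(A) + α·|A| over all subsets A ⊆ V; in particular { j ∈ V : w*_j ≥ 0 } is a minimizer of F. -/

import Mathlib

open Finset

set_option linter.unusedSectionVars false

section Aux
variable {V : Type*} [Fintype V] [DecidableEq V] [LinearOrder V]

noncomputable def greedyPt (F : Finset V → ℝ) (j : V) : ℝ :=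
  F (univ.filter (· ≤ j)) - F (univ.filter (· < j))

/-- downward closed sets with max m are exactly `filter (· ≤ m)` -/
lemma dc_filter_le (X : Finset V) (hX : ∀ i j : V, i ≤ j → j ∈ X → i ∈ X)
    (hne : X.Nonempty) : univ.filter (· ≤ X.max' hne) = X := by
  ext i
  simp only [mem_filter, mem_univ, true_and]
  exact ⟨fun h => hX i _ h (X.max'_mem hne), fun h => X.le_max' i h⟩

lemma dc_filter_lt (X : Finset V) (hX : ∀ i j : V, i ≤ j → j ∈ X → i ∈ X)
    (hne : X.Nonempty) : univ.filter (· < X.max' hne) = X.erase (X.max' hne) := by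
  ext i
  simp only [mem_filter, mem_univ, true_and, mem_erase]
  constructor
  · intro h
    exact ⟨ne_of_lt h, hX i _ h.le (X.max'_mem hne)⟩
  · intro ⟨h1, h2⟩
    exact lt_of_le_of_ne (X.le_max' i h2) h1

lemma erase_max_dc (X : Finset V) (hX : ∀ i j : V, i ≤ j → j ∈ X → i ∈ X)
    (hne : X.Nonempty) :
    ∀ i j : V, i ≤ j → j ∈ X.erase (X.max' hne) → i ∈ X.erase (X.max' hne) := by
  intro i j hij hj
  rw [mem_erase] at hj ⊢
  refine ⟨?_, hX i j hij hj.2⟩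
  intro h
  subst h
  exact hj.1 (le_antisymm (X.le_max' j hj.2) hij)

lemma sum_greedy_dc (F : Finset V → ℝ) (hnorm : F ∅ = 0) :
    ∀ X : Finset V, (∀ i j : V, i ≤ j → j ∈ X → i ∈ X) →
      ∑ j ∈ X, greedyPt F j = F X := by
  intro X
  induction X using Finset.strongInduction with
  | _ X ih =>
    intro hX
    rcases X.eq_empty_or_nonempty with rfl | hne
    · simp [hnorm]
    · have hm := X.max'_mem hne
      set m := X.max' hne with hmdef
      have hsum : ∑ j ∈ X, greedyPt F j = ∑ j ∈ X.erase m, greedyPt F j + greedyPt F m :=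
        (Finset.sum_erase_add X _ hm).symm
      rw [hsum, ih (X.erase m) (Finset.erase_ssubset hm) (erase_max_dc X hX hne)]
      unfold greedyPt
      rw [dc_filter_le X hX hne, dc_filter_lt X hX hne]
      ring

lemma greedy_feasible (F : Finset V → ℝ)
    (hsub : ∀ A B : Finset V, F (A ∪ B) + F (A ∩ B) ≤ F A + F B)
    (hnorm : F ∅ = 0) :
    ∀ X : Finset V, ∑ j ∈ X, greedyPt F j ≤ F X := by
  intro X
  induction X using Finset.strongInduction with
  | _ X ih =>
    rcases X.eq_empty_or_nonempty with rfl | hne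
    · simp [hnorm]
    · have hm := X.max'_mem hne
      set m := X.max' hne with hmdef
      have hsum : ∑ j ∈ X, greedyPt F j = ∑ j ∈ X.erase m, greedyPt F j + greedyPt F m :=
        (Finset.sum_erase_add X _ hm).symm
      have h1 : ∑ j ∈ X.erase m, greedyPt F j ≤ F (X.erase m) :=
        ih (X.erase m) (Finset.erase_ssubset hm)
      -- submodularity:  F(filter ≤ m) + F (X.erase m) ≤ F X + F (filter < m)
      have hunion : X ∪ univ.filter (· < m) = univ.filter (· ≤ m) := by
        ext i
        simp only [mem_union, mem_filter, mem_univ, true_and]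
        constructor
        · rintro (h | h)
          · exact X.le_max' i h
          · exact h.le
        · intro h
          rcases eq_or_lt_of_le h with rfl | h
          · exact Or.inl hm
          · exact Or.inr h
      have hinter : X ∩ univ.filter (· < m) = X.erase m := by
        ext i
        simp only [mem_inter, mem_filter, mem_univ, true_and, mem_erase]
        constructor
        · intro ⟨h1, h2⟩; exact ⟨ne_of_lt h2, h1⟩
        · intro ⟨h1, h2⟩; exact ⟨h2, lt_of_le_of_ne (X.le_max' i h2) h1⟩
      have := hsub X (univ.filter (· < m))
      rw [hunion, hinter] at this
      have h2 : greedyPt F m = F (univ.filter (· ≤ m)) - F (univ.filter (· < m)) := rfl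
      rw [hsum]
      linarith

lemma abel_bound (F : Finset V → ℝ) (hnorm : F ∅ = 0)
    (w : V → ℝ) (hw : ∀ i j : V, i ≤ j → w j ≤ w i)
    (s' : V → ℝ) (hs' : ∀ X : Finset V, ∑ j ∈ X, s' j ≤ F X) :
    ∀ X : Finset V, (∀ i j : V, i ≤ j → j ∈ X → i ∈ X) → ∀ hne : X.Nonempty,
      ∑ j ∈ X, w j * s' j - ∑ j ∈ X, w j * greedyPt F j ≤
        w (X.max' hne) * (∑ j ∈ X, s' j - F X) := by
  intro X
  induction X using Finset.strongInduction with
  | _ X ih =>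
    intro hX hne
    have hm := X.max'_mem hne
    set m := X.max' hne with hmdef
    have hFm : F (X.erase m) + greedyPt F m = F X := by
      have h : greedyPt F m = F (univ.filter (· ≤ m)) - F (univ.filter (· < m)) := rfl
      rw [h, dc_filter_le X hX hne, dc_filter_lt X hX hne]; ring
    have l1 : ∑ j ∈ X, w j * s' j = ∑ j ∈ X.erase m, w j * s' j + w m * s' m :=
      (Finset.sum_erase_add X _ hm).symm
    have l2 : ∑ j ∈ X, w j * greedyPt F j
        = ∑ j ∈ X.erase m, w j * greedyPt F j + w m * greedyPt F m :=
      (Finset.sum_erase_add X _ hm).symm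
    have l3 : ∑ j ∈ X, s' j = ∑ j ∈ X.erase m, s' j + s' m :=
      (Finset.sum_erase_add X _ hm).symm
    rcases (X.erase m).eq_empty_or_nonempty with he | hne2
    · rw [he] at l1 l2 l3
      simp only [Finset.sum_empty, zero_add] at l1 l2 l3
      have hGm : greedyPt F m = F X := by rw [he, hnorm] at hFm; linarith
      rw [l1, l2, l3, hGm]; ring_nf; exact le_refl _
    · have hm2 := (X.erase m).max'_mem hne2
      set m2 := (X.erase m).max' hne2 with hm2def
      have hm2X : m2 ∈ X := Finset.mem_of_mem_erase hm2
      have hwm : w m ≤ w m2 := hw m2 m (X.le_max' m2 hm2X)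
      have ihe := ih (X.erase m) (Finset.erase_ssubset hm) (erase_max_dc X hX hne) hne2
      have hneg : ∑ j ∈ X.erase m, s' j - F (X.erase m) ≤ 0 := by
        linarith [hs' (X.erase m)]
      have h3 : w m2 * (∑ j ∈ X.erase m, s' j - F (X.erase m)) ≤
          w m * (∑ j ∈ X.erase m, s' j - F (X.erase m)) :=
        mul_le_mul_of_nonpos_right hwm hneg
      have hexp : w m * (∑ j ∈ X, s' j - F X)
          = w m * (∑ j ∈ X.erase m, s' j - F (X.erase m)) + w m * s' m
            - w m * greedyPt F m := by
        rw [l3, ← hFm]; ring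
      rw [l1, l2, hexp]
      linarith

lemma abel (F : Finset V → ℝ) (hnorm : F ∅ = 0)
    (w : V → ℝ) (hw : ∀ i j : V, i ≤ j → w j ≤ w i)
    (s' : V → ℝ) (hs'T : ∑ j, s' j = F univ)
    (hs' : ∀ X : Finset V, ∑ j ∈ X, s' j ≤ F X) :
    ∑ j, w j * s' j ≤ ∑ j, w j * greedyPt F j := by
  rcases (univ : Finset V).eq_empty_or_nonempty with he | hne
  · rw [show (∑ j, w j * s' j) = ∑ j ∈ univ, w j * s' j from rfl,
      show (∑ j, w j * greedyPt F j) = ∑ j ∈ univ, w j * greedyPt F j from rfl, he]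
    simp
  · have h := abel_bound F hnorm w hw s' hs' univ (fun i j _ _ => mem_univ i) hne
    have hz : ∑ j ∈ univ, s' j - F univ = 0 := by rw [hs'T]; ring
    rw [hz, mul_zero] at h
    linarith

end Aux

set_option maxHeartbeats 2000000 in
theorem stmt15 {V : Type*} [Fintype V] [DecidableEq V]
    (F : Finset V → ℝ)
    (hsub : ∀ A B : Finset V, F (A ∪ B) + F (A ∩ B) ≤ F A + F B)
    (hnorm : F ∅ = 0)
    (ε : ℝ) (hε : 0 < ε)
    (f : (V → ℝ) → ℝ)
    (hf : ∀ w : V → ℝ, f w = sSup {x : ℝ | ∃ s : V → ℝ,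
      ((∑ j, s j) = F Finset.univ ∧ ∀ A : Finset V, (∑ j ∈ A, s j) ≤ F A) ∧
      x = ∑ j, w j * s j})
    (wstar : V → ℝ) (hwstar : ∀ j, |wstar j| ≤ ε)
    (hmin : ∀ w : V → ℝ, (∀ j, |w j| ≤ ε) →
      f wstar + (1/2) * (∑ j, (wstar j)^2) ≤ f w + (1/2) * ∑ j, (w j)^2) :
    (∀ α ∈ Set.Ioo (-ε) ε, ∀ A : Finset V,
      F (Finset.univ.filter (fun j => α ≤ wstar j)) +
          α * ((Finset.univ.filter (fun j => α ≤ wstar j)).card : ℝ) ≤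
        F A + α * (A.card : ℝ)) ∧
    (∀ A : Finset V, F (Finset.univ.filter (fun j => (0:ℝ) ≤ wstar j)) ≤ F A) := by
  have hmain : ∀ α ∈ Set.Ioo (-ε) ε, ∀ A : Finset V,
      F (Finset.univ.filter (fun j => α ≤ wstar j)) +
          α * ((Finset.univ.filter (fun j => α ≤ wstar j)).card : ℝ) ≤
        F A + α * (A.card : ℝ) := by
    intro α hα A
    obtain ⟨hα1, hα2⟩ := hα
    set n := Fintype.card V with hn
    -- the tie-breaking secondary key: elements of A come first
    set c : V → ℕ := fun j => (Fintype.equivFin V j : ℕ) + (if j ∈ A then 0 else n) with hc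
    have hidx : ∀ j : V, ((Fintype.equivFin V) j : ℕ) < n := fun j => (Fintype.equivFin V j).isLt
    have hcinj : Function.Injective c := by
      intro i j h
      simp only [hc] at h
      by_cases hi : i ∈ A <;> by_cases hj : j ∈ A <;>
        simp only [hi, hj, if_true, if_false, add_zero] at h
      · exact (Fintype.equivFin V).injective (Fin.val_injective h)
      · exact absurd h (by have := hidx i; omega)
      · exact absurd h (by have := hidx j; omega)
      · exact (Fintype.equivFin V).injective (Fin.val_injective (by omega))
    have hκinj : Function.Injective (fun j : V => toLex (-wstar j, c j)) := by
      intro i j h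
      have h2 : (-wstar i, c i) = (-wstar j, c j) := congrArg ofLex h
      exact hcinj (congrArg Prod.snd h2)
    letI L : LinearOrder V := LinearOrder.lift' (fun j : V => toLex (-wstar j, c j)) hκinj
    have hle : ∀ i j : V, i ≤ j ↔
        (-wstar i < -wstar j ∨ (-wstar i = -wstar j ∧ c i ≤ c j)) := by
      intro i j
      exact Iff.trans Iff.rfl (Prod.Lex.le_iff (x := toLex (-wstar i, c i)) (y := toLex (-wstar j, c j)))
    have hmono : ∀ i j : V, i ≤ j → wstar j ≤ wstar i := by
      intro i j h
      rcases (hle i j).1 h with h | ⟨h1, _⟩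
      · linarith
      · linarith
    have htie : ∀ i j : V, i ≤ j → j ∈ A → wstar i ≤ wstar j → i ∈ A := by
      intro i j hij hjA hwij
      rcases (hle i j).1 hij with h | ⟨h1, h2⟩
      · exfalso; linarith
      · by_contra hiA
        simp only [hc, hjA, if_true, hiA, if_false, add_zero] at h2
        have := hidx j
        omega
    set B := Finset.univ.filter (fun j => α ≤ wstar j) with hB
    have hBmem : ∀ j, j ∈ B ↔ α ≤ wstar j := by
      intro j; simp [hB]
    have hBdc : ∀ i j : V, i ≤ j → j ∈ B → i ∈ B := by
      intro i j hij hj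
      rw [hBmem] at hj ⊢
      exact le_trans hj (hmono i j hij)
    set s := greedyPt F with hs
    have hsB : ∑ j ∈ B, s j = F B := sum_greedy_dc F hnorm B hBdc
    have hsuniv : (∑ j, s j) = F Finset.univ :=
      sum_greedy_dc F hnorm Finset.univ (fun i j _ _ => mem_univ i)
    have hsfeas : ∀ X : Finset V, (∑ j ∈ X, s j) ≤ F X := greedy_feasible F hsub hnorm
    -- the perturbation direction
    set δ : V → ℝ := fun j => if j ∈ A \ B then (1:ℝ) else if j ∈ B \ A then -1 else 0
      with hδ
    have hδ_le : ∀ j, δ j ≤ 1 := by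
      intro j; simp only [hδ]; split_ifs <;> norm_num
    have hδ_ge : ∀ j, -1 ≤ δ j := by
      intro j; simp only [hδ]; split_ifs <;> norm_num
    have hδ_sum : ∀ x : V → ℝ,
        (∑ j, δ j * x j) = ∑ j ∈ A \ B, x j - ∑ j ∈ B \ A, x j := by
      intro x
      have hpt : ∀ j, δ j * x j =
          (if j ∈ A \ B then x j else 0) - (if j ∈ B \ A then x j else 0) := by
        intro j
        by_cases h1 : j ∈ A \ B <;> by_cases h2 : j ∈ B \ A <;>
          simp only [hδ, h1, h2, if_true, if_false] <;> first
            | (exfalso; rw [mem_sdiff] at h1 h2; exact h1.2 h2.1)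
            | ring
      rw [Finset.sum_congr rfl (fun j _ => hpt j), Finset.sum_sub_distrib,
        Finset.sum_ite_mem, Finset.sum_ite_mem, Finset.univ_inter, Finset.univ_inter]
    -- minimal gap between distinct values of wstar
    set diffs := ((Finset.univ.image wstar ×ˢ Finset.univ.image wstar).filter
      (fun p => p.1 < p.2)).image (fun p => p.2 - p.1) with hdiffs
    set gap := if h : diffs.Nonempty then diffs.min' h else 1 with hgap
    have hgap0 : 0 < gap := by
      rw [hgap]
      split_ifs with h
      · obtain ⟨p, hp, hpe⟩ := Finset.mem_image.1 (diffs.min'_mem h)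
        rw [Finset.mem_filter] at hp
        rw [← hpe]
        linarith [hp.2]
      · exact one_pos
    have hgaple : ∀ i j : V, wstar j < wstar i → gap ≤ wstar i - wstar j := by
      intro i j h
      have hmem : wstar i - wstar j ∈ diffs := by
        rw [hdiffs]
        refine Finset.mem_image.2 ⟨(wstar j, wstar i), ?_, rfl⟩
        rw [Finset.mem_filter, Finset.mem_product]
        exact ⟨⟨Finset.mem_image_of_mem _ (mem_univ j),
          Finset.mem_image_of_mem _ (mem_univ i)⟩, h⟩
      have hne : diffs.Nonempty := ⟨_, hmem⟩
      rw [hgap, dif_pos hne]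
      exact Finset.min'_le _ _ hmem
    set t₀ := min (min (ε - α) (ε + α)) (gap / 2) with ht₀def
    have ht₀ : 0 < t₀ :=
      lt_min (lt_min (by linarith) (by linarith)) (by linarith)
    set E := ∑ j, δ j * (s j + wstar j) with hE
    have hcore : ∀ t : ℝ, 0 < t → t ≤ t₀ → 0 ≤ E + t * ((n : ℝ) / 2) := by
      intro t ht ht0
      have htε1 : t ≤ ε - α := le_trans ht0 (le_trans (min_le_left _ _) (min_le_left _ _))
      have htε2 : t ≤ ε + α := le_trans ht0 (le_trans (min_le_left _ _) (min_le_right _ _))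
      have htgap : t ≤ gap / 2 := le_trans ht0 (min_le_right _ _)
      set wt : V → ℝ := fun j => wstar j + t * δ j with hwt
      have hfeas : ∀ j, |wt j| ≤ ε := by
        intro j
        rw [abs_le]
        have hwj := abs_le.1 (hwstar j)
        by_cases h1 : j ∈ A \ B
        · have hδj : δ j = 1 := by simp only [hδ, h1, if_true]
          have hjB : wstar j < α := by
            have h2 := (mem_sdiff.1 h1).2
            rw [hBmem] at h2
            linarith [not_le.1 h2]
          constructor <;> simp only [hwt, hδj, mul_one] <;> linarith
        · by_cases h2 : j ∈ B \ A
          · have hδj : δ j = -1 := by simp only [hδ, h1, h2, if_true, if_false]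
            have hjB : α ≤ wstar j := (hBmem j).1 (mem_sdiff.1 h2).1
            constructor <;> simp only [hwt, hδj] <;> linarith
          · have hδj : δ j = 0 := by simp only [hδ, h1, h2, if_false]
            constructor <;> simp only [hwt, hδj, mul_zero, add_zero] <;> linarith
      have hwtmono : ∀ i j : V, i ≤ j → wt j ≤ wt i := by
        intro i j hij
        rcases (hle i j).1 hij with h | ⟨h1, h2⟩
        · have hlt : wstar j < wstar i := by linarith
          have hg := hgaple i j hlt
          have h3 := hδ_le j
          have h4 := hδ_ge i
          simp only [hwt]
          nlinarith [ht.le]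
        · have heq : wstar i = wstar j := by linarith
          have hBiff : (j ∈ B ↔ i ∈ B) := by
            rw [hBmem, hBmem, heq]
          have hAimp : j ∈ A → i ∈ A := fun hj => htie i j hij hj (le_of_eq heq)
          have hδij : δ j ≤ δ i := by
            by_cases hjAB : j ∈ A \ B
            · have hiAB : i ∈ A \ B := by
                rw [mem_sdiff] at hjAB ⊢
                exact ⟨hAimp hjAB.1, fun hi => hjAB.2 (hBiff.2 hi)⟩
              simp only [hδ, hjAB, hiAB, if_true]
              exact le_refl _
            · by_cases hjBA : j ∈ B \ A
              · calc δ j = -1 := by simp only [hδ, hjAB, hjBA, if_true, if_false]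
                  _ ≤ δ i := hδ_ge i
              · have hδj : δ j = 0 := by simp only [hδ, hjAB, hjBA, if_false]
                have hiBA : i ∉ B \ A := by
                  rw [mem_sdiff]
                  rintro ⟨hiB, hiA⟩
                  have hjB : j ∈ B := hBiff.2 hiB
                  have hjA : j ∉ A := by
                    intro hjA
                    exact hjAB (by rw [mem_sdiff]; exact ⟨hjA, fun h => hjBA (by
                      rw [mem_sdiff]; exact ⟨hjB, fun hA => hiA (hAimp hA)⟩)⟩)
                  exact hjBA (mem_sdiff.2 ⟨hjB, hjA⟩)
                rw [hδj]
                simp only [hδ]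
                by_cases hiAB2 : i ∈ A \ B
                · simp [hiAB2]
                · simp [hiAB2, hiBA]
          simp only [hwt, heq]
          have := mul_le_mul_of_nonneg_left hδij ht.le
          linarith
      have hsmem : ∀ w : V → ℝ, (∑ j, w j * s j) ∈ {x : ℝ | ∃ s' : V → ℝ,
          ((∑ j, s' j) = F Finset.univ ∧ ∀ X : Finset V, (∑ j ∈ X, s' j) ≤ F X) ∧
          x = ∑ j, w j * s' j} := fun w => ⟨s, ⟨hsuniv, hsfeas⟩, rfl⟩
      have hub : ∀ w : V → ℝ, (∀ i j : V, i ≤ j → w j ≤ w i) →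
          ∀ x ∈ {x : ℝ | ∃ s' : V → ℝ,
          ((∑ j, s' j) = F Finset.univ ∧ ∀ X : Finset V, (∑ j ∈ X, s' j) ≤ F X) ∧
          x = ∑ j, w j * s' j}, x ≤ ∑ j, w j * s j := by
        rintro w hw x ⟨s', ⟨hs'T, hs'⟩, rfl⟩
        exact abel F hnorm w hw s' hs'T hs'
      have hf1 : (∑ j, wstar j * s j) ≤ f wstar := by
        rw [hf]
        exact le_csSup ⟨_, hub wstar hmono⟩ (hsmem wstar)
      have hf2 : f wt ≤ ∑ j, wt j * s j := by
        rw [hf]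
        exact csSup_le ⟨_, hsmem wt⟩ (hub wt hwtmono)
      have hopt := hmin wt hfeas
      have e1 : (∑ j, wt j * s j) = (∑ j, wstar j * s j) + t * (∑ j, δ j * s j) := by
        rw [Finset.mul_sum, ← Finset.sum_add_distrib]
        refine Finset.sum_congr rfl fun j _ => ?_
        simp only [hwt]; ring
      have e2 : (∑ j, (wt j)^2) = (∑ j, (wstar j)^2) +
          (2*t*(∑ j, δ j * wstar j) + t^2 * (∑ j, (δ j)^2)) := by
        rw [Finset.mul_sum, Finset.mul_sum, ← Finset.sum_add_distrib,
          ← Finset.sum_add_distrib]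
        refine Finset.sum_congr rfl fun j _ => ?_
        simp only [hwt]; ring
      have hδsq : (∑ j, (δ j)^2) ≤ (n : ℝ) := by
        calc (∑ j, (δ j)^2) ≤ ∑ _j : V, (1:ℝ) := by
              refine Finset.sum_le_sum fun j _ => ?_
              have h3 := hδ_le j
              have h4 := hδ_ge j
              nlinarith
          _ = (n : ℝ) := by
              rw [Finset.sum_const, Finset.card_univ, nsmul_eq_mul, mul_one, hn]
      have hEe : E = (∑ j, δ j * s j) + ∑ j, δ j * wstar j := by
        rw [hE, ← Finset.sum_add_distrib]
        exact Finset.sum_congr rfl fun j _ => by ring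
      have hsq : t^2/2 * (∑ j, (δ j)^2) ≤ t^2/2 * (n:ℝ) :=
        mul_le_mul_of_nonneg_left hδsq (by positivity)
      have h0' : (∑ j, wstar j * s j) + 1/2 * (∑ j, (wstar j)^2)
          ≤ (∑ j, wt j * s j) + 1/2 * (∑ j, (wt j)^2) := by linarith
      rw [e1, e2] at h0'
      have h0 : 0 ≤ t * ((∑ j, δ j * s j) + (∑ j, δ j * wstar j))
          + t^2/2 * (∑ j, (δ j)^2) := by
        have hr : t * ((∑ j, δ j * s j) + (∑ j, δ j * wstar j))
            = t * (∑ j, δ j * s j) + t * (∑ j, δ j * wstar j) := by ring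
        rw [hr]
        linarith
      have h2 : 0 ≤ t * (E + t * ((n:ℝ)/2)) := by
        have hmul : t * (E + t*((n:ℝ)/2)) = t * ((∑ j, δ j * s j)
            + (∑ j, δ j * wstar j)) + t^2/2*(n:ℝ) := by rw [hEe]; ring
        rw [hmul]
        linarith
      nlinarith [h2, ht]
    have hE0 : 0 ≤ E := by
      by_contra hEneg
      push_neg at hEneg
      have hn0 : (0:ℝ) ≤ (n:ℝ) := Nat.cast_nonneg n
      have hden : (0:ℝ) < (n:ℝ) + 1 := by linarith
      set t := min t₀ (-E / ((n:ℝ)+1)) with htd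
      have ht : 0 < t := lt_min ht₀ (div_pos (by linarith) hden)
      have h := hcore t ht (min_le_left _ _)
      have h2 : t ≤ -E/((n:ℝ)+1) := min_le_right _ _
      have h3 : t * ((n:ℝ)/2) < -E := by
        have h4 : t * ((n:ℝ)/2) ≤ (-E/((n:ℝ)+1)) * ((n:ℝ)/2) :=
          mul_le_mul_of_nonneg_right h2 (by positivity)
        have h5 : (-E/((n:ℝ)+1)) * ((n:ℝ)/2) < -E := by
          rw [div_mul_eq_mul_div, div_lt_iff₀ hden]
          nlinarith
        linarith
      linarith
    -- conclude
    have hEeq : E = ∑ j ∈ A \ B, (s j + wstar j) - ∑ j ∈ B \ A, (s j + wstar j) :=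
      hδ_sum (fun j => s j + wstar j)
    have c1 : (∑ j ∈ A \ B, (s j + wstar j)) ≤ ∑ j ∈ A \ B, (s j + α) := by
      refine Finset.sum_le_sum fun j hj => ?_
      have h2 := (mem_sdiff.1 hj).2
      rw [hBmem] at h2
      have := not_le.1 h2
      linarith
    have c2 : (∑ j ∈ B \ A, (s j + α)) ≤ ∑ j ∈ B \ A, (s j + wstar j) := by
      refine Finset.sum_le_sum fun j hj => ?_
      have h2 := (hBmem j).1 (mem_sdiff.1 hj).1
      linarith
    have key : (∑ j ∈ B \ A, (s j + α)) ≤ ∑ j ∈ A \ B, (s j + α) := by linarith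
    have splitB : (∑ j ∈ B ∩ A, (s j + α)) + ∑ j ∈ B \ A, (s j + α)
        = ∑ j ∈ B, (s j + α) := Finset.sum_inter_add_sum_sdiff B A _
    have splitA : (∑ j ∈ A ∩ B, (s j + α)) + ∑ j ∈ A \ B, (s j + α)
        = ∑ j ∈ A, (s j + α) := Finset.sum_inter_add_sum_sdiff A B _
    have hIcomm : B ∩ A = A ∩ B := Finset.inter_comm B A
    have sumB : (∑ j ∈ B, (s j + α)) = F B + α * (B.card : ℝ) := by
      rw [Finset.sum_add_distrib, hsB, Finset.sum_const, nsmul_eq_mul]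
      ring
    have sumA : (∑ j ∈ A, (s j + α)) ≤ F A + α * (A.card : ℝ) := by
      rw [Finset.sum_add_distrib, Finset.sum_const, nsmul_eq_mul]
      have := hsfeas A
      linarith
    rw [hIcomm] at splitB
    linarith
  refine ⟨hmain, fun A => ?_⟩
  have h := hmain 0 ⟨by linarith, hε⟩ A
  simpa using h
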